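/- Let D be a PID and C an m×n matrix over D[x] of rank m (m ≤ n). If there exist n×m matrices Z₀, ..., Z_s over D[x] and elements d₀, ..., d_s ∈ D with C·Z_j = d_j·I_m for each j and gcd(d₀, ..., d_s) = 1, then C is minor left prime. -/

import Mathlib

open Matrix Polynomial

lemma det_mul_expand {R : Type*} [CommRing R] {m n : ℕ}
    (A : Matrix (Fin m) (Fin n) R) (B : Matrix (Fin n) (Fin m) R) :
    (A * B).det = ∑ g : Fin m → Fin n, (∏ k, B (g k) k) * (A.submatrix id g).det := by
  rw [← Matrix.det_transpose, Matrix.transpose_mul]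
  have h1 : (Bᵀ * Aᵀ) = fun k => ∑ j : Fin n, B j k • Aᵀ j := by
    ext k i; simp [Matrix.mul_apply, Finset.sum_apply, mul_comm]
  have h2 : (Bᵀ * Aᵀ).det
      = Matrix.detRowAlternating (fun k => ∑ j : Fin n, B j k • Aᵀ j) := by
    rw [← h1]; rfl
  rw [h2]
  have h3 := (Matrix.detRowAlternating (R := R) (n := Fin m)).toMultilinearMap.map_sum
    (g := fun (k : Fin m) (j : Fin n) => B j k • Aᵀ j)
  simp only [AlternatingMap.coe_multilinearMap] at h3
  rw [h3]
  refine Finset.sum_congr rfl fun g _ => ?_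
  have h4 := (Matrix.detRowAlternating (R := R) (n := Fin m)).toMultilinearMap.map_smul_univ
    (fun k => B (g k) k) (fun k => Aᵀ (g k))
  simp only [AlternatingMap.coe_multilinearMap] at h4
  rw [h4, smul_eq_mul]
  congr 1
  rw [← Matrix.det_transpose (A.submatrix id g)]
  rfl

/-- if C·Z_j = d_j·I with d_j ∈ D and gcd(d₀,…,d_s) = 1,
then C is minor left prime. -/
theorem stmt_4 (D : Type*) [CommRing D] [IsDomain D] [IsPrincipalIdealRing D]
    (m n : ℕ) (hmn : m ≤ n)
    (C : Matrix (Fin m) (Fin n) (Polynomial D))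
    (hrank : C.rank = m)
    (s : ℕ)
    (Z : Fin (s + 1) → Matrix (Fin n) (Fin m) (Polynomial D))
    (d : Fin (s + 1) → D)
    (hZ : ∀ j, C * Z j = Polynomial.C (d j) • (1 : Matrix (Fin m) (Fin m) (Polynomial D)))
    (hgcd : ∀ e : D, (∀ j, e ∣ d j) → IsUnit e) :
    ∀ δ : Polynomial D,
      (∀ g : Fin m → Fin n, Function.Injective g → δ ∣ (C.submatrix id g).det)
      → IsUnit δ := by
  intro δ hδ
  -- δ divides each d j ^ m (as a constant polynomial)
  have key : ∀ j, δ ∣ Polynomial.C (d j ^ m) := by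
    intro j
    have h1 : (C * Z j).det = Polynomial.C (d j ^ m) := by
      rw [hZ j, Matrix.det_smul, Matrix.det_one, mul_one, map_pow]
      simp [Finset.card_univ]
    rw [← h1, det_mul_expand]
    refine Finset.dvd_sum fun g _ => ?_
    by_cases hg : Function.Injective g
    · exact Dvd.dvd.mul_left (hδ g hg) _
    · have : (C.submatrix id g).det = 0 := by
        rw [Function.not_injective_iff] at hg
        obtain ⟨a, b, hab, hne⟩ := hg
        rw [← Matrix.det_transpose]
        refine Matrix.det_zero_of_row_eq hne ?_
        ext k
        simp [Matrix.transpose_apply, hab]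
      rw [this, mul_zero]
      exact dvd_zero δ
  -- some d j is nonzero
  have hex : ∃ j, d j ≠ 0 := by
    by_contra h
    push_neg at h
    have := hgcd 0 (fun j => by rw [h j])
    exact not_isUnit_zero this
  obtain ⟨j0, hj0⟩ := hex
  have hC0 : Polynomial.C (d j0 ^ m) ≠ 0 := by
    simpa using pow_ne_zero m hj0
  -- δ is a nonzero constant
  have hdeg : δ.natDegree = 0 := by
    have := Polynomial.natDegree_le_of_dvd (key j0) hC0
    simpa using this
  have hδeq : δ = Polynomial.C (δ.coeff 0) := (Polynomial.eq_C_of_natDegree_eq_zero hdeg)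
  set c := δ.coeff 0 with hc
  have hcdvd : ∀ j, c ∣ d j ^ m := by
    intro j
    have := key j
    rw [hδeq, Polynomial.C_dvd_iff_dvd_coeff] at this
    simpa only [Polynomial.coeff_C_zero] using this 0
  have hcne : c ≠ 0 := by
    intro h
    apply hC0
    have := key j0
    rw [hδeq, h, map_zero, zero_dvd_iff] at this
    exact this
  -- c is a unit
  have hcu : IsUnit c := by
    by_contra hcu
    obtain ⟨p, hpirr, hpc⟩ := WfDvdMonoid.exists_irreducible_factor hcu hcne
    have hp : Prime p := hpirr.prime
    have : ∀ j, p ∣ d j := fun j => hp.dvd_of_dvd_pow (hpc.trans (hcdvd j))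
    exact hp.not_unit (hgcd p this)
  rw [hδeq]
  exact Polynomial.isUnit_C.mpr hcu
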